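/- Let G(N,M;α,β,K) = ∑_{j∈ℤ} (−1)^j q^{(K/2) j ((α+β)j + α − β)} [M+N choose N−Kj]_q. Suppose F(L) = ∑_{j∈ℤ} α_j(q) [2L choose L−j]_q where each coefficient series satisfies: F(k) has nonnegative coefficients for all k ≥ 0. Then ∑_{j∈ℤ} α_j(q) q^{2j^2} [2L choose L−2j]_q has nonnegative coefficients for all L ≥ 0. -/

import Mathlib

open LaurentPolynomial Finset

noncomputable section

/-- The Gaussian binomial coefficient `[m choose n]_q` as a polynomial in `q`,
defined via the `q`-Pascal recurrence; it equals `(q;q)_m/((q;q)_n (q;q)_{m-n})`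
for `0 ≤ n ≤ m`. -/
def gb : ℕ → ℕ → Polynomial ℤ
  | _, 0 => 1
  | 0, _ + 1 => 0
  | m + 1, n + 1 => gb m n + Polynomial.X ^ (n + 1) * gb m (n + 1)

/-- `[m choose n]_q` with integer indices, zero unless `0 ≤ n ≤ m`,
viewed as a Laurent polynomial in `q`. -/
def qbin (m n : ℤ) : LaurentPolynomial ℤ :=
  if 0 ≤ n ∧ n ≤ m then (gb m.toNat n.toNat).toLaurent else 0

/-- A Laurent polynomial is a polynomial in `q` with nonnegative coefficients. -/
def IsNonneg (x : LaurentPolynomial ℤ) : Prop :=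
  ∃ P : Polynomial ℤ, (∀ n, 0 ≤ P.coeff n) ∧ P.toLaurent = x

/-- The triangular number `T(j) = j(j+1)/2`. -/
def tri (j : ℤ) : ℤ := j * (j + 1) / 2

open Polynomial in
section
lemma gb_zero_right (m : ℕ) : gb m 0 = 1 := by cases m <;> rfl

lemma gb_eq_zero : ∀ {m n : ℕ}, m < n → gb m n = 0
  | 0, n+1, _ => rfl
  | m+1, n+1, h => by
      rw [gb, gb_eq_zero (by omega), gb_eq_zero (by omega), mul_zero, add_zero]

lemma gb_self : ∀ m : ℕ, gb m m = 1
  | 0 => rfl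
  | m+1 => by rw [gb, gb_self m, gb_eq_zero (by omega), mul_zero, add_zero]

/-- `1 + q + ... + q^{n-1}` -/
def qnat (n : ℕ) : Polynomial ℤ := ∑ i ∈ range n, Polynomial.X ^ i

lemma qnat_succ (n : ℕ) : qnat (n+1) = qnat n + Polynomial.X ^ n :=
  sum_range_succ _ _

lemma qnat_add (a b : ℕ) : qnat (a + b) = qnat a + Polynomial.X ^ a * qnat b := by
  induction b with
  | zero => simp [qnat]
  | succ b ih =>
      show qnat ((a+b)+1) = _
      rw [qnat_succ, qnat_succ, ih, pow_add]
      ring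

def qf : ℕ → Polynomial ℤ
  | 0 => 1
  | n + 1 => qf n * qnat (n + 1)

lemma qnat_monic (n : ℕ) : (qnat (n+1)).Monic := by
  have : qnat (n+1) = ∑ i ∈ range (n+1), Polynomial.X ^ i := rfl
  rw [this]
  exact monic_geom_sum_X (by omega)

lemma qf_ne_zero (n : ℕ) : qf n ≠ 0 := by
  induction n with
  | zero => exact one_ne_zero
  | succ n ih => exact mul_ne_zero ih (qnat_monic n).ne_zero

lemma gb_mul_qf : ∀ m n : ℕ, n ≤ m → gb m n * (qf n * qf (m - n)) = qf m
  | 0, 0, _ => by simp [gb_zero_right, qf]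
  | m+1, 0, _ => by simp [gb_zero_right, qf]
  | m+1, n+1, h => by
      have hnm : n ≤ m := by omega
      rw [gb]
      rcases eq_or_lt_of_le hnm with rfl | hlt
      · rw [gb_eq_zero (Nat.lt_succ_self _), mul_zero, add_zero]
        have h1 : n + 1 - (n + 1) = 0 := by omega
        rw [h1]
        have hthis := gb_mul_qf n n le_rfl
        rw [Nat.sub_self] at hthis
        calc gb n n * (qf (n+1) * qf 0)
            = (gb n n * (qf n * qf 0)) * qnat (n+1) := by
              rw [show qf (n+1) = qf n * qnat (n+1) from rfl]; ring
          _ = qf n * qnat (n+1) := by rw [hthis]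
          _ = qf (n+1) := rfl
      · have h2 : m + 1 - (n + 1) = (m - (n+1)) + 1 := by omega
        have e1 : gb m n * (qf (n+1) * qf (m - n)) = qf m * qnat (n+1) := by
          calc gb m n * (qf (n+1) * qf (m-n))
              = (gb m n * (qf n * qf (m-n))) * qnat (n+1) := by rw [qf]; ring
            _ = qf m * qnat (n+1) := by rw [gb_mul_qf m n hnm]
        have e2 : Polynomial.X ^ (n+1) * gb m (n+1) * (qf (n+1) * qf (m - n)) =
            Polynomial.X ^ (n+1) * (qf m * qnat (m - n)) := by
          have h3 : m - n = (m - (n+1)) + 1 := by omega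
          have h5 := gb_mul_qf m (n+1) hlt
          calc Polynomial.X ^ (n+1) * gb m (n+1) * (qf (n+1) * qf (m - n))
              = Polynomial.X ^ (n+1) * (gb m (n+1) * (qf (n+1) * qf (m - (n+1)))) *
                  qnat ((m - (n+1)) + 1) := by
                rw [h3, show qf ((m - (n+1)) + 1) = qf (m - (n+1)) * qnat ((m - (n+1)) + 1)
                  from rfl]
                ring
            _ = Polynomial.X ^ (n+1) * qf m * qnat ((m - (n+1)) + 1) := by rw [h5]
            _ = _ := by rw [← h3]; ring
        have h3 : m - n = (m - (n+1)) + 1 := by omega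
        rw [h2, ← h3, add_mul, e1, e2]
        have h4 : qnat (n+1) + Polynomial.X ^ (n+1) * qnat (m - n) = qnat (m+1) := by
          have h6 := (qnat_add (n+1) (m - n)).symm
          rwa [show (n+1) + (m - n) = m + 1 by omega] at h6
        calc qf m * qnat (n+1) + Polynomial.X ^ (n+1) * (qf m * qnat (m-n))
            = qf m * (qnat (n+1) + Polynomial.X ^ (n+1) * qnat (m-n)) := by ring
          _ = qf m * qnat (m+1) := by rw [h4]
          _ = qf (m+1) := rfl

lemma qf_cancel {x y : Polynomial ℤ} (n : ℕ) (h : x * qf n = y * qf n) : x = y :=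
  mul_right_cancel₀ (qf_ne_zero n) h

lemma gb_symm {m n : ℕ} (h : n ≤ m) : gb m (m - n) = gb m n := by
  have h1 := gb_mul_qf m n h
  have h2 := gb_mul_qf m (m - n) (Nat.sub_le m n)
  rw [show m - (m - n) = n by omega] at h2
  apply qf_cancel n
  apply qf_cancel (m - n)
  calc gb m (m-n) * qf n * qf (m-n) = gb m (m-n) * (qf (m-n) * qf n) := by ring
    _ = qf m := h2
    _ = gb m n * (qf n * qf (m-n)) := h1.symm
    _ = gb m n * qf n * qf (m-n) := by ring

lemma gb_pascal' {m n : ℕ} (h : n ≤ m) :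
    gb (m+1) (n+1) = Polynomial.X ^ (m - n) * gb m n + gb m (n+1) := by
  apply qf_cancel (n+1)
  apply qf_cancel (m - n)
  have key : gb (m+1) (n+1) * (qf (n+1) * qf (m - n)) = qf (m+1) := by
    have := gb_mul_qf (m+1) (n+1) (by omega)
    rwa [show m + 1 - (n+1) = m - n by omega] at this
  have e1 : gb m n * (qf (n+1) * qf (m - n)) = qf m * qnat (n+1) := by
    calc gb m n * (qf (n+1) * qf (m-n))
        = (gb m n * (qf n * qf (m-n))) * qnat (n+1) := by
          rw [show qf (n+1) = qf n * qnat (n+1) from rfl]; ring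
      _ = qf m * qnat (n+1) := by rw [gb_mul_qf m n h]
  rcases eq_or_lt_of_le h with rfl | hlt
  · rw [gb_eq_zero (Nat.lt_succ_self _)]
    calc gb (n+1) (n+1) * qf (n+1) * qf (n - n)
        = gb (n+1) (n+1) * (qf (n+1) * qf (n - n)) := by ring
      _ = qf (n+1) := key
      _ = (Polynomial.X ^ (n-n) * gb n n + 0) * qf (n+1) * qf (n - n) := by
          rw [Nat.sub_self, gb_self]; simp [show qf 0 = 1 from rfl]
  · have e2 : gb m (n+1) * (qf (n+1) * qf (m - n)) = qf m * qnat (m - n) := by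
      have h3 : m - n = (m - (n+1)) + 1 := by omega
      have h5 := gb_mul_qf m (n+1) hlt
      calc gb m (n+1) * (qf (n+1) * qf (m - n))
          = (gb m (n+1) * (qf (n+1) * qf (m - (n+1)))) * qnat ((m - (n+1)) + 1) := by
            rw [h3, show qf ((m - (n+1)) + 1) = qf (m - (n+1)) * qnat ((m - (n+1)) + 1)
              from rfl]; ring
        _ = qf m * qnat ((m - (n+1)) + 1) := by rw [h5]
        _ = _ := by rw [← h3]
    have h4 : Polynomial.X ^ (m - n) * qnat (n+1) + qnat (m - n) = qnat (m+1) := by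
      have h6 := (qnat_add (m - n) (n+1)).symm
      rw [show (m - n) + (n + 1) = m + 1 by omega] at h6
      rw [← h6]; ring
    calc gb (m+1) (n+1) * qf (n+1) * qf (m - n)
        = gb (m+1) (n+1) * (qf (n+1) * qf (m - n)) := by ring
      _ = qf (m+1) := key
      _ = qf m * qnat (m+1) := rfl
      _ = qf m * (Polynomial.X ^ (m-n) * qnat (n+1) + qnat (m - n)) := by rw [h4]
      _ = Polynomial.X ^ (m-n) * (gb m n * (qf (n+1) * qf (m-n)))
            + gb m (n+1) * (qf (n+1) * qf (m - n)) := by rw [e1, e2]; ring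
      _ = _ := by ring

lemma gb_trinomial {n b c : ℕ} (hc : c ≤ b) (hb : b ≤ n) :
    gb n b * gb b c = gb n c * gb (n - c) (b - c) := by
  apply qf_cancel c
  apply qf_cancel (b - c)
  apply qf_cancel (n - b)
  have e1 : gb b c * (qf c * qf (b - c)) = qf b := gb_mul_qf b c hc
  have e2 : gb n b * (qf b * qf (n - b)) = qf n := gb_mul_qf n b hb
  have e3 : gb n c * (qf c * qf (n - c)) = qf n := gb_mul_qf n c (hc.trans hb)
  have e4 : gb (n - c) (b - c) * (qf (b - c) * qf (n - b)) = qf (n - c) := by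
    have := gb_mul_qf (n - c) (b - c) (by omega)
    rwa [show n - c - (b - c) = n - b by omega] at this
  calc gb n b * gb b c * qf c * qf (b-c) * qf (n-b)
      = gb n b * (gb b c * (qf c * qf (b-c))) * qf (n-b) := by ring
    _ = gb n b * (qf b * qf (n-b)) := by rw [e1]; ring
    _ = qf n := e2
    _ = gb n c * (qf c * qf (n-c)) := e3.symm
    _ = gb n c * (qf c * (gb (n-c) (b-c) * (qf (b-c) * qf (n-b)))) := by rw [e4]
    _ = _ := by ring

lemma gb_coeff_nonneg : ∀ m n i : ℕ, 0 ≤ (gb m n).coeff i := by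
  intro m
  induction m with
  | zero =>
      intro n i
      cases n with
      | zero =>
          rw [gb_zero_right]
          rcases eq_or_ne i 0 with rfl | hi
          · simp
          · simp [Polynomial.coeff_one, hi]
      | succ n => show (0:ℤ) ≤ (0:Polynomial ℤ).coeff i; simp
  | succ m ih =>
      intro n i
      cases n with
      | zero =>
          rw [gb_zero_right]
          rcases eq_or_ne i 0 with rfl | hi
          · simp
          · simp [Polynomial.coeff_one, hi]
      | succ n =>
          rw [gb]
          rw [Polynomial.coeff_add]
          have h1 := ih n i
          have h2 : 0 ≤ (Polynomial.X ^ (n+1) * gb m (n+1)).coeff i := by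
            rw [Polynomial.coeff_X_pow_mul']
            split
            · exact ih (n+1) _
            · exact le_refl 0
          exact add_nonneg h1 h2

lemma qbin_eq_zero {m n : ℤ} (h : ¬(0 ≤ n ∧ n ≤ m)) : qbin m n = 0 := if_neg h

lemma qbin_cast (M : ℕ) (n : ℤ) (hn : 0 ≤ n) : qbin M n = (gb M n.toNat).toLaurent := by
  unfold qbin
  split_ifs with h
  · norm_num
  · push_neg at h
    have : (M:ℤ) < n := h hn
    rw [gb_eq_zero (by omega), map_zero]

lemma qbin_natCast (M N : ℕ) : qbin M N = (gb M N).toLaurent := by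
  rw [qbin_cast M N (by positivity)]
  norm_num

lemma T_mul_toLaurent (k : ℕ) (p : Polynomial ℤ) :
    T (k : ℤ) * p.toLaurent = (Polynomial.X ^ k * p).toLaurent := by
  rw [map_mul, Polynomial.toLaurent_X_pow]

lemma qbin_pascal (m : ℕ) (n : ℤ) :
    qbin ((m:ℤ)+1) n = qbin m (n-1) + T n * qbin m n := by
  rcases lt_or_ge n 0 with hn | hn
  · rw [qbin_eq_zero (by omega), qbin_eq_zero (by omega), qbin_eq_zero (by omega)]
    simp
  · rcases eq_or_lt_of_le hn with rfl | hpos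
    · rw [qbin_eq_zero (m := (m:ℤ)) (n := (0:ℤ)-1) (by omega)]
      rw [show ((m:ℤ)+1) = ((m+1:ℕ):ℤ) by push_cast; ring]
      rw [qbin_cast (m+1) 0 le_rfl, qbin_cast m 0 le_rfl]
      simp [gb_zero_right]
    · rw [show ((m:ℤ)+1) = ((m+1:ℕ):ℤ) by push_cast; ring]
      rw [qbin_cast (m+1) n hn, qbin_cast m n hn, qbin_cast m (n-1) (by omega)]
      rw [show (n-1).toNat = n.toNat - 1 by omega]
      rw [show n = ((n.toNat:ℕ):ℤ) by omega, T_mul_toLaurent, ← map_add]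
      congr 1
      simp only [Int.toNat_natCast]
      rw [show n.toNat = (n.toNat - 1) + 1 by omega, gb,
        show n.toNat - 1 + 1 - 1 = n.toNat - 1 by omega]

lemma qbin_pascal' (m : ℕ) (n : ℤ) :
    qbin ((m:ℤ)+1) n = T ((m:ℤ)+1-n) * qbin m (n-1) + qbin m n := by
  rcases lt_or_ge n 0 with hn | hn
  · rw [qbin_eq_zero (by omega), qbin_eq_zero (by omega), qbin_eq_zero (by omega)]
    simp
  · rcases eq_or_lt_of_le hn with rfl | hpos
    · rw [qbin_eq_zero (m := (m:ℤ)) (n := (0:ℤ)-1) (by omega)]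
      rw [show ((m:ℤ)+1) = ((m+1:ℕ):ℤ) by push_cast; ring]
      rw [qbin_cast (m+1) 0 le_rfl, qbin_cast m 0 le_rfl]
      simp [gb_zero_right]
    · rcases lt_or_ge ((m:ℤ)+1) n with hbig | hle
      · rw [qbin_eq_zero (by omega), qbin_eq_zero (by omega), qbin_eq_zero (by omega)]
        simp
      · rw [show ((m:ℤ)+1) = ((m+1:ℕ):ℤ) by push_cast; ring]
        rw [qbin_cast (m+1) n hn, qbin_cast m n hn, qbin_cast m (n-1) (by omega)]
        rw [show (((m+1:ℕ)):ℤ)-n = (((m+1-n.toNat : ℕ)):ℤ) by omega, T_mul_toLaurent, ← map_add]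
        congr 1
        rw [show (n-1).toNat = n.toNat - 1 by omega]
        have h1 : n.toNat - 1 ≤ m := by omega
        have := gb_pascal' h1
        rw [show n.toNat - 1 + 1 = n.toNat by omega] at this
        rw [this, show m - (n.toNat - 1) = m + 1 - n.toNat by omega]

lemma qbin_symm (m : ℕ) (n : ℤ) : qbin m ((m:ℤ) - n) = qbin m n := by
  by_cases h : 0 ≤ n ∧ n ≤ (m:ℤ)
  · rw [qbin_cast m n h.1, qbin_cast m (m - n) (by omega)]
    rw [show ((m:ℤ)-n).toNat = m - n.toNat by omega]
    rw [gb_symm (by omega)]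
  · rw [qbin_eq_zero h, qbin_eq_zero (by omega)]

lemma qbin_trinomial (n b c : ℤ) :
    qbin n b * qbin b c = qbin n c * qbin (n - c) (b - c) := by
  by_cases hc : 0 ≤ c ∧ c ≤ b
  · by_cases hb : b ≤ n
    · have hn : 0 ≤ n := le_trans (le_trans hc.1 hc.2) hb
      obtain ⟨C, rfl⟩ : ∃ C : ℕ, c = (C:ℤ) := ⟨c.toNat, by omega⟩
      obtain ⟨B, rfl⟩ : ∃ B : ℕ, b = (B:ℤ) := ⟨b.toNat, by omega⟩
      obtain ⟨N, rfl⟩ : ∃ N : ℕ, n = (N:ℤ) := ⟨n.toNat, by omega⟩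
      rw [show (N:ℤ) - C = ((N - C : ℕ):ℤ) by omega,
        show (B:ℤ) - C = ((B - C : ℕ):ℤ) by omega]
      rw [qbin_natCast, qbin_natCast, qbin_natCast, qbin_natCast, ← map_mul, ← map_mul]
      congr 1
      exact gb_trinomial (by omega) (by omega)
    · push_neg at hb
      rw [qbin_eq_zero (m := n) (n := b) (by omega),
        qbin_eq_zero (m := n - c) (n := b - c) (by omega)]
      simp
  · rw [qbin_eq_zero (m := b) (n := c) hc]
    push_neg at hc
    by_cases hc0 : 0 ≤ c
    · rw [qbin_eq_zero (m := n - c) (n := b - c) (by intro h2; exact absurd h2.2 (by omega))]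
      simp
    · rw [qbin_eq_zero (m := n) (n := c) (by omega)]
      simp

lemma qbin_neg {m n : ℤ} (h : m < 0) : qbin m n = 0 := qbin_eq_zero (by omega)

lemma qbin_symm_int (m n : ℤ) : qbin m (m - n) = qbin m n := by
  rcases lt_or_ge m 0 with hm | hm
  · rw [qbin_neg hm, qbin_neg hm]
  · obtain ⟨M, rfl⟩ : ∃ M : ℕ, m = (M:ℤ) := ⟨m.toNat, by omega⟩
    exact qbin_symm M n

lemma qbin_vandermonde (m n : ℕ) : ∀ c : ℤ,
    qbin ((m:ℤ) + n) c =
      ∑ j ∈ range (m+1), T (((m:ℤ)-j)*(c-j)) * qbin m j * qbin n (c-j) := by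
  induction n with
  | zero =>
      intro c
      have key : ∀ j ∈ range (m+1),
          T (((m:ℤ)-j)*(c-j)) * qbin m j * qbin (0:ℕ) (c-j)
            = if (j:ℤ) = c then qbin m c else 0 := by
        intro j hj
        by_cases hjc : (j:ℤ) = c
        · rw [if_pos hjc, ← hjc]
          simp only [sub_self, mul_zero, T_zero]
          rw [show (qbin ((0:ℕ):ℤ) 0 : LaurentPolynomial ℤ) = 1 by
            rw [qbin]; simp [gb_zero_right]]
          ring
        · rw [if_neg hjc, qbin_eq_zero (m := ((0:ℕ):ℤ)) (n := c - j) (by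
            push_cast; omega), mul_zero]
      rw [sum_congr rfl key]
      push_cast
      rw [add_zero]
      by_cases hc : 0 ≤ c ∧ c ≤ (m:ℤ)
      · have hs := Finset.sum_eq_single_of_mem (s := range (m+1))
          (f := fun x => if (x:ℤ) = c then qbin (m:ℤ) c else 0) c.toNat
          (by simp; omega) (fun b hb hbne => by
            have : ¬((b:ℤ) = c) := by omega
            simp [this])
        rw [hs]
        have hcc : ((c.toNat:ℕ):ℤ) = c := by omega
        simp [hcc]
      · rw [qbin_eq_zero hc, sum_eq_zero]
        intro j hj
        rw [if_neg]
        intro hjc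
        simp at hj
        omega
  | succ n ih =>
      intro c
      have lhs1 : qbin ((m:ℤ) + (n+1:ℕ)) c
          = T (((m:ℤ)+n+1)-c) * qbin ((m:ℤ)+n) (c-1) + qbin ((m:ℤ)+n) c := by
        have h := qbin_pascal' (m+n) c
        rw [show (((m+n:ℕ)):ℤ) = (m:ℤ)+n by push_cast; ring] at h
        rw [show ((m:ℤ) + (n+1:ℕ)) = ((m:ℤ)+n)+1 by push_cast; ring, h]
      rw [lhs1, ih, ih, mul_sum, ← sum_add_distrib]
      apply sum_congr rfl
      intro j hj
      have hpas := qbin_pascal' n (c - j)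
      rw [show ((n+1:ℕ):ℤ) = (n:ℤ)+1 by push_cast; ring, hpas]
      rw [mul_add]
      have e1 : T (((m:ℤ)+n+1)-c) * (T (((m:ℤ)-j)*(c-1-j)) * qbin m j * qbin n (c-1-j))
          = T (((m:ℤ)-j)*(c-j)) * qbin m j * (T ((n:ℤ)+1-(c-j)) * qbin n (c-j-1)) := by
        rw [show (c-1-j) = (c-j-1) by ring]
        rw [show (T (((m:ℤ)-j)*(c-j)) * qbin m j * (T ((n:ℤ)+1-(c-j)) * qbin n (c-j-1)))
            = (T (((m:ℤ)-j)*(c-j)) * T ((n:ℤ)+1-(c-j))) * (qbin m j * qbin n (c-j-1))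
            by ring]
        rw [show (T (((m:ℤ)+n+1)-c) * (T (((m:ℤ)-j)*(c-j-1)) * qbin m j * qbin n (c-j-1)))
            = (T ((((m:ℤ)+n+1)-c)) * T (((m:ℤ)-j)*(c-j-1))) * (qbin m j * qbin n (c-j-1))
            by ring]
        rw [← T_add, ← T_add]
        congr 2
        ring
      rw [e1]

def Wp (L k : ℕ) : Polynomial ℤ :=
  ∑ m ∈ range (L+1), Polynomial.X ^ (k^2+(m+k)^2) * (gb L m * gb (L - m) (2*k))

/-- Term function for the LHS double sum. -/
def Aterm (L : ℕ) (a : ℤ) (p : ℤ × ℤ) : LaurentPolynomial ℤ :=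
  T (p.1^2+(p.2+p.1)^2) *
    (qbin L p.2 * (qbin ((L:ℤ)-p.2) (2*p.1) * qbin (2*p.1) (p.1-a)))

/-- Term function for the RHS double sum. -/
def Bterm (L : ℕ) (a : ℤ) (p : ℤ × ℤ) : LaurentPolynomial ℤ :=
  T ((p.1-a)^2+a^2+(p.1-p.2)*(p.1-2*a-p.2)) *
    (qbin L p.2 * (qbin ((L:ℤ)-p.2) (p.1-p.2) * qbin ((L:ℤ)-p.1) (p.1-2*a-p.2)))

lemma sum_Icc_int (N : ℕ) (f : ℤ → LaurentPolynomial ℤ) :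
    ∑ i ∈ Finset.Icc (0:ℤ) N, f i = ∑ i ∈ range (N+1), f (i:ℤ) := by
  refine Finset.sum_nbij' (fun x => x.toNat) (fun x => (x:ℤ)) ?_ ?_ ?_ ?_ ?_
  · intro x hx; simp at hx ⊢; omega
  · intro x hx; simp at hx ⊢; omega
  · intro x hx; simp at hx ⊢; omega
  · intro x hx; simp
  · intro x hx; simp at hx; rw [show ((x.toNat:ℕ):ℤ) = x by omega]

lemma finsum_box (N : ℕ) (f : ℤ × ℤ → LaurentPolynomial ℤ)
    (h : ∀ p : ℤ × ℤ, f p ≠ 0 → (0 ≤ p.1 ∧ p.1 ≤ N) ∧ (0 ≤ p.2 ∧ p.2 ≤ N)) :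
    ∑ᶠ p : ℤ × ℤ, f p = ∑ i ∈ range (N+1), ∑ j ∈ range (N+1), f ((i:ℤ), (j:ℤ)) := by
  rw [finsum_eq_sum_of_support_subset f
    (s := (Finset.Icc (0:ℤ) N) ×ˢ (Finset.Icc (0:ℤ) N)) (by
      intro p hp
      have hb := h p hp
      simp only [Finset.coe_product, Set.mem_prod, Finset.mem_coe, Finset.mem_Icc]
      omega)]
  rw [Finset.sum_product, sum_Icc_int]
  apply sum_congr rfl
  intro i _
  rw [sum_Icc_int]

/-- Shear equivalence of `ℤ × ℤ`. -/
def she (a : ℤ) : ℤ × ℤ ≃ ℤ × ℤ where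
  toFun p := (p.1 + p.2 + a, p.2)
  invFun p := (p.1 - p.2 - a, p.2)
  left_inv p := by ext <;> simp <;> ring
  right_inv p := by ext <;> simp <;> ring

lemma Aterm_support (L : ℕ) (a : ℤ) :
    ∀ p : ℤ × ℤ, Aterm L a p ≠ 0 → (0 ≤ p.1 ∧ p.1 ≤ L) ∧ (0 ≤ p.2 ∧ p.2 ≤ L) := by
  intro p hp
  by_cases h2 : 0 ≤ p.2 ∧ p.2 ≤ (L:ℤ)
  · refine ⟨⟨?_, ?_⟩, h2⟩
    · by_contra h1
      push_neg at h1
      apply hp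
      unfold Aterm
      rw [qbin_neg (show 2*p.1 < 0 by omega)]
      ring
    · by_contra h1
      push_neg at h1
      apply hp
      unfold Aterm
      rw [qbin_eq_zero (m := (L:ℤ)-p.2) (n := 2*p.1) (by omega)]
      ring
  · exfalso
    apply hp
    unfold Aterm
    rw [qbin_eq_zero (m := (L:ℤ)) (n := p.2) h2]
    ring

lemma Bterm_support (L : ℕ) (a : ℤ) :
    ∀ p : ℤ × ℤ, Bterm L a p ≠ 0 → (0 ≤ p.1 ∧ p.1 ≤ L) ∧ (0 ≤ p.2 ∧ p.2 ≤ L) := by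
  intro p hp
  by_cases h2 : 0 ≤ p.2 ∧ p.2 ≤ (L:ℤ)
  · refine ⟨⟨?_, ?_⟩, h2⟩
    · by_contra h1
      push_neg at h1
      apply hp
      unfold Bterm
      rw [qbin_eq_zero (m := (L:ℤ)-p.2) (n := p.1-p.2) (by omega)]
      ring
    · by_contra h1
      push_neg at h1
      apply hp
      unfold Bterm
      rw [qbin_neg (show (L:ℤ)-p.1 < 0 by omega)]
      ring
  · exfalso
    apply hp
    unfold Bterm
    rw [qbin_eq_zero (m := (L:ℤ)) (n := p.2) h2]
    ring

lemma step1 (L : ℕ) (a : ℤ) :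
    ∑ k ∈ range (L+1), (Wp L k).toLaurent * qbin (2*(k:ℤ)) ((k:ℤ)-a)
      = ∑ᶠ p : ℤ × ℤ, Aterm L a p := by
  rw [finsum_box L (Aterm L a) (Aterm_support L a)]
  apply sum_congr rfl
  intro k hk
  rw [Wp, map_sum, sum_mul]
  apply sum_congr rfl
  intro m hm
  simp only [mem_range] at hm hk
  have hmL : m ≤ L := by omega
  unfold Aterm
  simp only
  rw [map_mul, map_mul, Polynomial.toLaurent_X_pow]
  rw [← qbin_natCast L m, ← qbin_natCast (L-m) (2*k)]
  rw [show ((L-m:ℕ):ℤ) = (L:ℤ)-(m:ℤ) by omega, show ((2*k:ℕ):ℤ) = 2*(k:ℤ) by push_cast; ring]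
  rw [show ((k^2+(m+k)^2 : ℕ):ℤ) = (k:ℤ)^2+((m:ℤ)+(k:ℤ))^2 by push_cast; ring]
  ring

lemma step2 (L : ℕ) (a : ℤ) : ∑ᶠ p : ℤ × ℤ, Aterm L a p = ∑ᶠ p : ℤ × ℤ, Bterm L a p := by
  rw [← finsum_comp_equiv (she a) (f := Bterm L a)]
  apply finsum_congr
  intro p
  unfold Aterm Bterm she
  simp only [Equiv.coe_fn_mk]
  rw [show (p.1+p.2+a)-p.2 = p.1+a by ring, show (p.1+p.2+a)-2*a-p.2 = p.1-a by ring]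
  rw [show ((p.1+p.2+a)-a)^2+a^2+(p.1+a)*(p.1-a) = p.1^2+(p.2+p.1)^2 by ring]
  rw [show p.1-a = 2*p.1-(p.1+a) by ring, qbin_symm_int (2*p.1) (p.1+a)]
  rw [qbin_trinomial ((L:ℤ)-p.2) (2*p.1) (p.1+a)]
  rw [show (L:ℤ)-p.2-(p.1+a) = (L:ℤ)-(p.1+p.2+a) by ring,
    show 2*p.1-(p.1+a) = p.1-a by ring]

lemma inner_sum_w (L t : ℕ) (a : ℤ) (ht : t ≤ L) :
    ∑ j ∈ range (L+1), Bterm L a ((t:ℤ), (j:ℤ))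
      = T (((t:ℤ)-a)^2+a^2) * (qbin L t * qbin L ((t:ℤ)-2*a)) := by
  have hv := qbin_vandermonde t (L-t) ((t:ℤ)-2*a)
  rw [show ((t:ℤ) + ((L-t:ℕ):ℤ)) = (L:ℤ) by omega] at hv
  rw [hv, mul_sum, mul_sum]
  rw [← Finset.sum_subset (h := range_subset_range.2 (show t+1 ≤ L+1 by omega))
    (f := fun (j : ℕ) => Bterm L a ((t:ℤ), (j:ℤ)))
    (by
      intro x hx hnx
      simp only [mem_range] at hx hnx
      unfold Bterm
      simp only
      rw [qbin_eq_zero (m := (L:ℤ)-(x:ℤ)) (n := (t:ℤ)-(x:ℤ)) (by omega)]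
      ring)]
  apply sum_congr rfl
  intro m hm
  simp only [mem_range] at hm
  unfold Bterm
  simp only
  rw [show ((L-t:ℕ):ℤ) = (L:ℤ)-(t:ℤ) by omega]
  have htr := qbin_trinomial (L:ℤ) (t:ℤ) (m:ℤ)
  rw [T_add]
  linear_combination (-(T (((t:ℤ)-a)^2+a^2) * T (((t:ℤ)-(m:ℤ))*((t:ℤ)-2*a-(m:ℤ))) *
    qbin ((L:ℤ)-(t:ℤ)) ((t:ℤ)-2*a-(m:ℤ)))) * htr

lemma step3 (L : ℕ) (a : ℤ) :
    T (2*a^2) * qbin (2*(L:ℤ)) ((L:ℤ)-2*a) = ∑ᶠ p : ℤ × ℤ, Bterm L a p := by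
  rw [finsum_box L (Bterm L a) (Bterm_support L a)]
  have h1 : qbin (2*(L:ℤ)) ((L:ℤ)-2*a) = ∑ t ∈ range (L+1),
      T (((L:ℤ)-(t:ℤ))*((L:ℤ)-2*a-(t:ℤ))) * qbin L t * qbin L ((L:ℤ)-2*a-(t:ℤ)) := by
    have hv := qbin_vandermonde L L ((L:ℤ)-2*a)
    rw [show (L:ℤ)+(L:ℤ) = 2*(L:ℤ) by ring] at hv
    exact hv
  rw [h1, mul_sum]
  rw [← Finset.sum_range_reflect (fun t => T (2*a^2) *
    (T (((L:ℤ)-(t:ℤ))*((L:ℤ)-2*a-(t:ℤ))) * qbin L t * qbin L ((L:ℤ)-2*a-(t:ℤ)))) (L+1)]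
  apply sum_congr rfl
  intro t ht
  simp only [mem_range] at ht
  have htL : t ≤ L := by omega
  rw [inner_sum_w L t a htL]
  simp only [Nat.add_sub_cancel]
  rw [show ((L-t:ℕ):ℤ) = (L:ℤ)-(t:ℤ) by omega]
  rw [show (L:ℤ)-2*a-((L:ℤ)-(t:ℤ)) = (t:ℤ)-2*a by ring]
  rw [show (L:ℤ)-((L:ℤ)-(t:ℤ)) = (t:ℤ) by ring]
  rw [show (qbin (L:ℤ) ((L:ℤ)-(t:ℤ)) : LaurentPolynomial ℤ) = qbin L t from qbin_symm L t]
  rw [show (((t:ℤ))-a)^2+a^2 = 2*a^2 + (t:ℤ)*((t:ℤ)-2*a) by ring, T_add]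
  ring

lemma warnaar_id (L : ℕ) (a : ℤ) :
    ∑ k ∈ range (L+1), (Wp L k).toLaurent * qbin (2*(k:ℤ)) ((k:ℤ)-a)
      = T (2*a^2) * qbin (2*(L:ℤ)) ((L:ℤ)-2*a) := by
  rw [step1, step2, step3]

lemma polyNN_mul {P Q : Polynomial ℤ} (hP : ∀ n, 0 ≤ P.coeff n) (hQ : ∀ n, 0 ≤ Q.coeff n) :
    ∀ n, 0 ≤ (P * Q).coeff n := by
  intro n
  rw [Polynomial.coeff_mul]
  exact Finset.sum_nonneg fun p _ => mul_nonneg (hP p.1) (hQ p.2)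

lemma polyNN_X_pow (e : ℕ) : ∀ n, 0 ≤ (Polynomial.X ^ e : Polynomial ℤ).coeff n := by
  intro n
  rw [Polynomial.coeff_X_pow]
  split <;> norm_num

lemma Wp_NN (L k : ℕ) : ∀ n, 0 ≤ (Wp L k).coeff n := by
  intro n
  rw [Wp, Polynomial.finset_sum_coeff]
  apply Finset.sum_nonneg
  intro m _
  exact polyNN_mul (polyNN_X_pow _)
    (polyNN_mul (gb_coeff_nonneg L m) (gb_coeff_nonneg (L-m) (2*k))) n

lemma isNonneg_zero : IsNonneg 0 := ⟨0, by simp, map_zero _⟩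

lemma isNonneg_add {x y : LaurentPolynomial ℤ} (hx : IsNonneg x) (hy : IsNonneg y) :
    IsNonneg (x + y) := by
  obtain ⟨P, hP, rfl⟩ := hx
  obtain ⟨Q, hQ, rfl⟩ := hy
  exact ⟨P + Q, fun n => by rw [Polynomial.coeff_add]; exact add_nonneg (hP n) (hQ n),
    map_add _ _ _⟩

lemma isNonneg_mul {x y : LaurentPolynomial ℤ} (hx : IsNonneg x) (hy : IsNonneg y) :
    IsNonneg (x * y) := by
  obtain ⟨P, hP, rfl⟩ := hx
  obtain ⟨Q, hQ, rfl⟩ := hy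
  exact ⟨P * Q, polyNN_mul hP hQ, map_mul _ _ _⟩

lemma isNonneg_sum {ι : Type*} (s : Finset ι) (f : ι → LaurentPolynomial ℤ)
    (h : ∀ i ∈ s, IsNonneg (f i)) : IsNonneg (∑ i ∈ s, f i) :=
  Finset.sum_induction f IsNonneg (fun _ _ => isNonneg_add) isNonneg_zero h

end

/-- Warnaar's transformation is positivity-preserving: if every
`F(k) = ∑_{j ∈ ℤ} α_j(q) [2k choose k-j]_q` (`k ≥ 0`) has nonnegative
coefficients, then so does `∑_{j ∈ ℤ} α_j(q) q^{2j²} [2L choose L-2j]_q`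
for every `L ≥ 0`. -/
theorem warnaar_positivity_preserving (α : ℤ → LaurentPolynomial ℤ)
    (hfin : (Function.support α).Finite)
    (hF : ∀ k : ℕ, IsNonneg (∑ᶠ j : ℤ, α j * qbin (2 * k) ((k : ℤ) - j))) :
    ∀ L : ℕ, IsNonneg (∑ᶠ j : ℤ, α j * T (2 * j ^ 2) * qbin (2 * L) ((L : ℤ) - 2 * j)) := by
  intro L
  have hsup : ∀ g : ℤ → LaurentPolynomial ℤ,
      (Function.support fun j => α j * g j).Finite := by
    intro g
    apply hfin.subset
    intro j hj
    simp only [Function.mem_support] at hj ⊢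
    intro h0
    exact hj (by rw [h0, zero_mul])
  have key : (∑ᶠ j : ℤ, α j * T (2 * j ^ 2) * qbin (2 * L) ((L : ℤ) - 2 * j))
      = ∑ k ∈ range (L+1), (Wp L k).toLaurent *
          ∑ᶠ j : ℤ, α j * qbin (2 * k) ((k : ℤ) - j) := by
    calc (∑ᶠ j : ℤ, α j * T (2 * j ^ 2) * qbin (2 * L) ((L : ℤ) - 2 * j))
        = ∑ᶠ j : ℤ, ∑ k ∈ range (L+1),
            α j * ((Wp L k).toLaurent * qbin (2 * (k:ℤ)) ((k:ℤ) - j)) := by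
          apply finsum_congr
          intro j
          rw [mul_assoc, ← warnaar_id L j, Finset.mul_sum]
      _ = ∑ k ∈ range (L+1), ∑ᶠ j : ℤ,
            α j * ((Wp L k).toLaurent * qbin (2 * (k:ℤ)) ((k:ℤ) - j)) := by
          exact finsum_sum_comm (range (L+1))
            (fun j k => α j * ((Wp L k).toLaurent * qbin (2 * (k:ℤ)) ((k:ℤ) - j)))
            (fun k _ => hsup _)
      _ = ∑ k ∈ range (L+1), (Wp L k).toLaurent *
            ∑ᶠ j : ℤ, α j * qbin (2 * k) ((k : ℤ) - j) := by
          apply sum_congr rfl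
          intro k _
          rw [mul_finsum _ _]
          apply finsum_congr
          intro j
          push_cast
          ring
  rw [key]
  apply isNonneg_sum
  intro k _
  exact isNonneg_mul ⟨Wp L k, Wp_NN L k, rfl⟩ (hF k)
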